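/- For a positive integer N, the integer (−1)^{N(N−1)/2 + N} · (N!)^N is the square of a rational number if and only if N is divisible by 4. -/

import Mathlib

/-- Parity of the triangular-type exponent `N(N-1)/2 + N`. -/
lemma e_parity_aux (N : ℕ) (hN : 1 ≤ N) :
    (N * (N - 1) / 2 + N) % 2 = if N % 4 = 0 ∨ N % 4 = 3 then 0 else 1 := by
  obtain ⟨M, rfl⟩ : ∃ M, N = M + 1 := ⟨N - 1, by omega⟩
  have h2 : 2 ∣ (M + 1) * M := by
    rcases Nat.even_or_odd M with h | h
    · exact Dvd.dvd.mul_left h.two_dvd _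
    · have hm := Nat.odd_iff.mp h
      exact Dvd.dvd.mul_right (by omega : 2 ∣ (M + 1)) _
  obtain ⟨t, ht⟩ := h2
  simp only [Nat.add_sub_cancel]
  rw [ht, Nat.mul_div_cancel_left t (by norm_num)]
  obtain ⟨k, r, hr, rfl⟩ : ∃ k r, r < 4 ∧ M = 4 * k + r :=
    ⟨M / 4, M % 4, Nat.mod_lt _ (by norm_num), (Nat.div_add_mod M 4).symm⟩
  have hexp : 2 * t = 16 * (k * k) + 8 * (k * r) + r * r + 4 * k + r := by
    rw [← ht]; ring
  set a := k * k with ha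
  set b := k * r with hb
  clear_value a b
  interval_cases r
  · rw [if_neg (by omega)]; omega
  · rw [if_neg (by omega)]; omega
  · rw [if_pos (by omega)]; omega
  · rw [if_pos (by omega)]; omega

/-- A prime `p` with `p ≤ N < 2p` divides `N!` exactly once. -/
lemma val_fact_one (p N : ℕ) [hp : Fact p.Prime] (h1 : p ≤ N) (h2 : N < 2 * p) :
    padicValNat p (Nat.factorial N) = 1 := by
  have hp2 : 2 ≤ p := hp.out.two_le
  have hlog : Nat.log p N < 2 := by
    apply Nat.log_lt_of_lt_pow (by omega)
    have : p * 2 ≤ p * p := Nat.mul_le_mul_left p hp2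
    calc N < 2 * p := h2
      _ ≤ p * p := by omega
      _ = p ^ 2 := by ring
  rw [padicValNat_factorial hlog]
  have : N / p = 1 := Nat.div_eq_of_lt_le (by omega) (by omega)
  simp [this]

/-- For a positive integer `N`, the integer `(-1)^{N(N-1)/2 + N} · (N!)^N` is
the square of a rational number if and only if `4 ∣ N`. -/
theorem stmt_9 (N : ℕ) (hN : 1 ≤ N) :
    (∃ q : ℚ, ((-1) ^ (N * (N - 1) / 2 + N) * (N.factorial : ℚ) ^ N) = q ^ 2)
      ↔ 4 ∣ N := by
  have hpar := e_parity_aux N hN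
  constructor
  · rintro ⟨q, hq⟩
    have hfpos : (0 : ℚ) < (N.factorial : ℚ) ^ N := by
      have := Nat.factorial_pos N
      positivity
    by_cases hE : (N * (N - 1) / 2 + N) % 2 = 0
    · have h1 : ((-1 : ℚ)) ^ (N * (N - 1) / 2 + N) = 1 :=
        (Nat.even_iff.mpr hE).neg_one_pow
      rw [h1, one_mul] at hq
      have hNe : N % 2 = 0 := by
        by_contra hod
        have hod' : N % 2 = 1 := by omega
        have h04 : N % 4 = 0 ∨ N % 4 = 3 := by
          by_contra hc
          rw [if_neg hc] at hpar; omega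
        have h4 : N % 4 = 3 := by omega
        obtain ⟨p, pp, hp1, hp2⟩ := Nat.exists_prime_lt_and_le_two_mul (N / 2) (by omega)
        haveI : Fact p.Prime := ⟨pp⟩
        have hpN : p ≤ N := by omega
        have hN2p : N < 2 * p := by omega
        have hv1 : padicValNat p (Nat.factorial N) = 1 := val_fact_one p N hpN hN2p
        have hq0 : q ≠ 0 := by
          intro h
          rw [h] at hq
          simp only [ne_eq, OfNat.ofNat_ne_zero, not_false_eq_true, zero_pow] at hq
          rw [hq] at hfpos
          exact lt_irrefl _ hfpos
        have hf0 : ((N.factorial : ℚ)) ≠ 0 := by positivity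
        have hL : padicValRat p ((N.factorial : ℚ) ^ N) = N := by
          rw [padicValRat.pow (N.factorial : ℚ), padicValRat.of_nat, hv1]
          simp
        rw [hq, padicValRat.pow q] at hL
        omega
      have h04 : N % 4 = 0 ∨ N % 4 = 3 := by
        by_contra hc
        rw [if_neg hc] at hpar; omega
      omega
    · have hodd : Odd (N * (N - 1) / 2 + N) := Nat.odd_iff.mpr (by omega)
      rw [hodd.neg_one_pow] at hq
      nlinarith [sq_nonneg q, hfpos]
  · rintro ⟨m, rfl⟩
    have hm : 1 ≤ m := by omega
    have hE : (4 * m * (4 * m - 1) / 2 + 4 * m) % 2 = 0 := by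
      rw [hpar, if_pos (Or.inl (by omega))]
    refine ⟨(Nat.factorial (4 * m) : ℚ) ^ (2 * m), ?_⟩
    rw [(Nat.even_iff.mpr hE).neg_one_pow, one_mul, ← pow_mul]
    ring_nf
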